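/- Let A⁺, A⁻, B⁺, B⁻ be symmetric matrices with A⁻, B⁻ positive definite. Then ‖(A⁻)^{-1/2} A⁺ (A⁻)^{-1/2} - (B⁻)^{-1/2} B⁺ (B⁻)^{-1/2}‖ ≤ ‖(A⁻)^{-1}‖·‖A⁺‖·(‖(B⁻)^{-1}‖·‖B⁻ - A⁻‖ + 2‖(B⁻)^{-1/2}‖·‖B⁻ - A⁻‖^{1/2}) + ‖(B⁻)^{-1}‖·‖A⁺ - B⁺‖. -/

import Mathlib

open Matrix
open scoped Matrix.Norms.L2Operator RealInnerProductSpace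

/-- The spectral (ℓ²-operator) norm of a square real matrix. -/
noncomputable def specNorm {n : ℕ} (A : Matrix (Fin n) (Fin n) ℝ) : ℝ :=
  ‖Matrix.toEuclideanCLM (𝕜 := ℝ) A‖

open scoped ComplexOrder in
/-- The square root of a positive semidefinite matrix, as defined in the older Mathlib. -/
noncomputable def Matrix.PosSemidef.sqrt {n : Type*} [Fintype n] [DecidableEq n] {𝕜 : Type*}
    [RCLike 𝕜] {A : Matrix n n 𝕜} (hA : A.PosSemidef) : Matrix n n 𝕜 :=
  (hA.1.eigenvectorUnitary : Matrix n n 𝕜) * diagonal (fun i => ((√(hA.1.eigenvalues i) : ℝ) : 𝕜)) *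
    (star hA.1.eigenvectorUnitary : Matrix n n 𝕜)

lemma Matrix.PosSemidef.posSemidef_sqrt {n : ℕ} {A : Matrix (Fin n) (Fin n) ℝ}
    (hA : A.PosSemidef) : hA.sqrt.PosSemidef := by
  unfold Matrix.PosSemidef.sqrt
  have hd : (diagonal (fun i => ((√(hA.1.eigenvalues i) : ℝ) : ℝ))).PosSemidef := by
    rw [posSemidef_diagonal_iff]; intro i; exact Real.sqrt_nonneg _
  simpa [star_eq_conjTranspose] using
    hd.mul_mul_conjTranspose_same (hA.1.eigenvectorUnitary : Matrix (Fin n) (Fin n) ℝ)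

lemma Matrix.PosSemidef.sqrt_mul_self {n : ℕ} {A : Matrix (Fin n) (Fin n) ℝ}
    (hA : A.PosSemidef) : hA.sqrt * hA.sqrt = A := by
  unfold Matrix.PosSemidef.sqrt
  set U : Matrix (Fin n) (Fin n) ℝ := (hA.1.eigenvectorUnitary : Matrix (Fin n) (Fin n) ℝ)
  have hU : star U * U = 1 := (hA.1.eigenvectorUnitary).2.1
  set D : Matrix (Fin n) (Fin n) ℝ := diagonal (fun i => (RCLike.ofReal (√(hA.1.eigenvalues i)) : ℝ))
  have hDD : D * D = diagonal (RCLike.ofReal ∘ hA.1.eigenvalues) := by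
    simp only [D, diagonal_mul_diagonal]
    congr 1; funext i
    simp [Real.mul_self_sqrt (hA.eigenvalues_nonneg i)]
  have e : U * D * star U * (U * D * star U) = U * D * (star U * U) * D * star U := by
    simp only [mul_assoc]
  rw [e, hU, mul_one, mul_assoc U D D, hDD]
  exact (hA.1.spectral_theorem.trans (Unitary.conjStarAlgAut_apply _ _)).symm

namespace CongrPerturbAux

variable {n : ℕ}

lemma diag_norm_le (v : Fin n → ℝ) {C : ℝ} (hC : 0 ≤ C) (h : ∀ i, |v i| ≤ C) :
    ‖(diagonal v : Matrix (Fin n) (Fin n) ℝ)‖ ≤ C := by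
  rw [Matrix.l2_opNorm_def]
  refine ContinuousLinearMap.opNorm_le_bound _ hC fun x => ?_
  have hx : ∀ y : EuclideanSpace ℝ (Fin n), ‖y‖ = Real.sqrt (∑ i, ‖y i‖^2) := fun y => by
    rw [EuclideanSpace.norm_eq]
  rw [hx, hx]
  rw [← Real.sqrt_sq hC, ← Real.sqrt_mul (by positivity)]
  apply Real.sqrt_le_sqrt
  rw [Finset.mul_sum]
  refine Finset.sum_le_sum fun i _ => ?_
  have h2 : ((LinearEquiv.trans toEuclideanLin LinearMap.toContinuousLinearMap) (diagonal v) x) i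
      = v i * x i := by
    show ((WithLp.equiv 2 _).symm ((diagonal v) *ᵥ (WithLp.equiv 2 _ x))) i = _
    simp [Matrix.mulVec_diagonal]
  rw [h2]
  simp only [Real.norm_eq_abs, abs_mul, mul_pow]
  have h3 := h i
  have h4 : |v i|^2 ≤ C^2 := by nlinarith [abs_nonneg (v i)]
  nlinarith [sq_nonneg (x i), abs_nonneg (x i), sq_abs (x i)]

lemma matrix_one_norm_le : ‖(1 : Matrix (Fin n) (Fin n) ℝ)‖ ≤ 1 := by
  rw [show (1 : Matrix (Fin n) (Fin n) ℝ) = diagonal (fun _ => 1) by simp]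
  exact diag_norm_le _ zero_le_one (fun i => by simp)

lemma unitary_norm_le (U : Matrix (Fin n) (Fin n) ℝ) (hU : U ∈ Matrix.unitaryGroup (Fin n) ℝ) :
    ‖U‖ ≤ 1 := by
  have h1 : Uᴴ * U = 1 := hU.1
  have h2 := Matrix.l2_opNorm_conjTranspose_mul_self U
  rw [h1] at h2
  have h3 := matrix_one_norm_le (n := n)
  nlinarith [norm_nonneg U]

lemma herm_norm_le {A : Matrix (Fin n) (Fin n) ℝ} (hA : A.IsHermitian) {C : ℝ} (hC : 0 ≤ C)
    (h : ∀ i, |hA.eigenvalues i| ≤ C) : ‖A‖ ≤ C := by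
  set U : Matrix (Fin n) (Fin n) ℝ := (hA.eigenvectorUnitary : Matrix (Fin n) (Fin n) ℝ) with hUdef
  set D : Matrix (Fin n) (Fin n) ℝ := diagonal (RCLike.ofReal ∘ hA.eigenvalues) with hDdef
  have hd : ‖D‖ ≤ C := diag_norm_le _ hC (fun i => h i)
  have hU : ‖U‖ ≤ 1 := unitary_norm_le _ (hA.eigenvectorUnitary).2
  have hUs : ‖star U‖ ≤ 1 := by
    rw [Matrix.star_eq_conjTranspose, Matrix.l2_opNorm_conjTranspose]; exact hU
  have hA2 : A = U * D * star U := hA.spectral_theorem.trans (Unitary.conjStarAlgAut_apply _ _)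
  rw [hA2]
  have s1 : ‖U * D‖ ≤ C := by
    have := norm_mul_le U D
    nlinarith [norm_nonneg U, norm_nonneg D]
  have := norm_mul_le (U * D) (star U)
  nlinarith [norm_nonneg (U * D), norm_nonneg (star U)]

noncomputable def qf (M : Matrix (Fin n) (Fin n) ℝ) (x : EuclideanSpace ℝ (Fin n)) : ℝ :=
  ⇑x ⬝ᵥ (M *ᵥ ⇑x)

lemma qf_eq_inner (M : Matrix (Fin n) (Fin n) ℝ) (x : EuclideanSpace ℝ (Fin n)) :
    qf M x = ⟪x, toEuclideanCLM (𝕜 := ℝ) M x⟫ := by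
  simp [qf, PiLp.inner_apply, RCLike.inner_apply, dotProduct]
  exact Finset.sum_congr rfl fun i _ => mul_comm _ _

lemma abs_qf_le (M : Matrix (Fin n) (Fin n) ℝ) (x : EuclideanSpace ℝ (Fin n)) (hx : ‖x‖ = 1) :
    |qf M x| ≤ ‖M‖ := by
  rw [qf_eq_inner]
  calc |⟪x, toEuclideanCLM (𝕜 := ℝ) M x⟫| ≤ ‖x‖ * ‖toEuclideanCLM (𝕜 := ℝ) M x‖ :=
        abs_real_inner_le_norm _ _
    _ ≤ ‖x‖ * (‖toEuclideanCLM (𝕜 := ℝ) M‖ * ‖x‖) := by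
        gcongr; exact ContinuousLinearMap.le_opNorm _ _
    _ = ‖M‖ := by rw [hx, mul_one, one_mul]; exact (Matrix.cstar_norm_def M).symm

lemma qf_nonneg {M : Matrix (Fin n) (Fin n) ℝ} (hM : M.PosSemidef)
    (x : EuclideanSpace ℝ (Fin n)) : 0 ≤ qf M x := by
  simpa [qf] using hM.dotProduct_mulVec_nonneg ⇑x

lemma sqrt_norm_bound {A B : Matrix (Fin n) (Fin n) ℝ} (hA : A.PosSemidef) (hB : B.PosSemidef) :
    ‖hB.sqrt - hA.sqrt‖ ≤ Real.sqrt ‖B - A‖ := by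
  rcases Nat.eq_zero_or_pos n with hn | hn
  · subst hn
    rw [Subsingleton.elim (hB.sqrt - hA.sqrt) (0 : Matrix (Fin 0) (Fin 0) ℝ), norm_zero]
    exact Real.sqrt_nonneg _
  have : Nonempty (Fin n) := ⟨⟨0, hn⟩⟩
  set D := hB.sqrt - hA.sqrt with hDdef
  have hD : D.IsHermitian := hB.posSemidef_sqrt.1.sub hA.posSemidef_sqrt.1
  obtain ⟨i₀, -, hmax⟩ := Finset.exists_max_image Finset.univ (fun i => |hD.eigenvalues i|)
    ⟨Classical.arbitrary _, Finset.mem_univ _⟩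
  set μ := hD.eigenvalues i₀ with hμdef
  have hnorm : ‖D‖ ≤ |μ| := herm_norm_le hD (abs_nonneg _) (fun i => hmax i (Finset.mem_univ i))
  set x : EuclideanSpace ℝ (Fin n) := hD.eigenvectorBasis i₀ with hxdef
  have hx1 : ‖x‖ = 1 := hD.eigenvectorBasis.orthonormal.1 i₀
  have heig : D *ᵥ ⇑x = μ • ⇑x := hD.mulVec_eigenvectorBasis i₀
  have hxx : ⇑x ⬝ᵥ ⇑x = (1 : ℝ) := by
    have h2 := real_inner_self_eq_norm_sq x
    rw [hx1] at h2
    rw [one_pow] at h2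
    rw [← h2, EuclideanSpace.inner_eq_star_dotProduct]
    simp
  have hqD : qf D x = μ := by
    rw [qf, heig, dotProduct_smul, smul_eq_mul, hxx, mul_one]
  have hdecomp : B - A = hB.sqrt * D + D * hA.sqrt := by
    rw [hDdef, Matrix.mul_sub, Matrix.sub_mul, hB.sqrt_mul_self, hA.sqrt_mul_self]
    noncomm_ring
  have hq1 : qf (hB.sqrt * D) x = μ * qf hB.sqrt x := by
    rw [qf, ← Matrix.mulVec_mulVec, heig, Matrix.mulVec_smul, dotProduct_smul, qf, smul_eq_mul]
  have hvm : ⇑x ᵥ* D = μ • ⇑x := by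
    have ht : Dᵀ = D := by
      have h3 := hD.eq
      rwa [Matrix.conjTranspose_eq_transpose_of_trivial] at h3
    calc ⇑x ᵥ* D = ⇑x ᵥ* Dᵀ := by rw [ht]
      _ = D *ᵥ ⇑x := Matrix.vecMul_transpose _ _
      _ = μ • ⇑x := heig
  have hq2 : qf (D * hA.sqrt) x = μ * qf hA.sqrt x := by
    rw [qf, ← Matrix.mulVec_mulVec, Matrix.dotProduct_mulVec, hvm, smul_dotProduct,
      smul_eq_mul, qf]
  have hqBA : qf (B - A) x = μ * (qf hB.sqrt x + qf hA.sqrt x) := by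
    rw [hdecomp, qf, Matrix.add_mulVec, dotProduct_add, ← qf, ← qf, hq1, hq2]; ring
  have hrel : μ = qf hB.sqrt x - qf hA.sqrt x := by
    rw [← hqD, hDdef]
    simp only [qf, Matrix.sub_mulVec, dotProduct_sub]
  have ha := qf_nonneg hA.posSemidef_sqrt x
  have hb := qf_nonneg hB.posSemidef_sqrt x
  have habs : |qf (B - A) x| ≤ ‖B - A‖ := abs_qf_le _ _ hx1
  have hsq : μ ^ 2 ≤ ‖B - A‖ := by
    rw [hqBA] at habs
    rcases abs_le.1 habs with ⟨h1, h2⟩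
    rcases le_or_gt 0 μ with hμ | hμ
    · nlinarith
    · nlinarith
  calc ‖D‖ ≤ |μ| := hnorm
    _ = Real.sqrt (μ ^ 2) := (Real.sqrt_sq_eq_abs μ).symm
    _ ≤ Real.sqrt ‖B - A‖ := Real.sqrt_le_sqrt hsq

end CongrPerturbAux

lemma specNorm_eq {n : ℕ} (A : Matrix (Fin n) (Fin n) ℝ) : specNorm A = ‖A‖ := rfl

/-- Second inequality of Proposition `normcmcpcm_cmecpecme`: for symmetric `A⁺, B⁺`
and positive definite `A⁻, B⁻`,
`‖(A⁻)^{-1/2} A⁺ (A⁻)^{-1/2} - (B⁻)^{-1/2} B⁺ (B⁻)^{-1/2}‖ ≤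
  ‖(A⁻)^{-1}‖ ‖A⁺‖ (‖(B⁻)^{-1}‖ ‖B⁻ - A⁻‖ + 2‖(B⁻)^{-1/2}‖ ‖B⁻ - A⁻‖^{1/2})
  + ‖(B⁻)^{-1}‖ ‖A⁺ - B⁺‖`. -/
theorem congruence_perturbation_bound_two {n : ℕ}
    (Ap Am Bp Bm : Matrix (Fin n) (Fin n) ℝ)
    (hAp : Ap.IsSymm) (hBp : Bp.IsSymm) (hAm : Am.PosDef) (hBm : Bm.PosDef) :
    specNorm ((hAm.posSemidef.sqrt)⁻¹ * Ap * (hAm.posSemidef.sqrt)⁻¹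
        - (hBm.posSemidef.sqrt)⁻¹ * Bp * (hBm.posSemidef.sqrt)⁻¹)
      ≤ specNorm Am⁻¹ * specNorm Ap *
          (specNorm Bm⁻¹ * specNorm (Bm - Am)
            + 2 * specNorm ((hBm.posSemidef.sqrt)⁻¹) * Real.sqrt (specNorm (Bm - Am)))
        + specNorm Bm⁻¹ * specNorm (Ap - Bp) := by
  open CongrPerturbAux in
  set P := hAm.posSemidef.sqrt with hPdef
  set Q := hBm.posSemidef.sqrt with hQdef
  set S := P⁻¹ with hSdef
  set T := Q⁻¹ with hTdef
  have hPP : P * P = Am := hAm.posSemidef.sqrt_mul_self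
  have hQQ : Q * Q = Bm := hBm.posSemidef.sqrt_mul_self
  have hdetP : IsUnit P.det := by
    have h1 : P.det * P.det = Am.det := by rw [← Matrix.det_mul, hPP]
    have h2 : Am.det ≠ 0 := ne_of_gt hAm.det_pos
    refine isUnit_iff_ne_zero.2 fun h => h2 ?_
    rw [← h1, h, mul_zero]
  have hdetQ : IsUnit Q.det := by
    have h1 : Q.det * Q.det = Bm.det := by rw [← Matrix.det_mul, hQQ]
    have h2 : Bm.det ≠ 0 := ne_of_gt hBm.det_pos
    refine isUnit_iff_ne_zero.2 fun h => h2 ?_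
    rw [← h1, h, mul_zero]
  have hPS : P * S = 1 := Matrix.mul_nonsing_inv P hdetP
  have hTQ : T * Q = 1 := Matrix.nonsing_inv_mul Q hdetQ
  have hSherm : S.IsHermitian := hAm.posSemidef.posSemidef_sqrt.1.inv
  have hTherm : T.IsHermitian := hBm.posSemidef.posSemidef_sqrt.1.inv
  -- norms of inverses as squares
  have eAm : ‖Am⁻¹‖ = ‖S‖ * ‖S‖ := by
    have h1 : Am⁻¹ = S * S := by rw [← hPP, Matrix.mul_inv_rev]
    rw [h1]
    have := Matrix.l2_opNorm_conjTranspose_mul_self S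
    rwa [hSherm.eq] at this
  have eBm : ‖Bm⁻¹‖ = ‖T‖ * ‖T‖ := by
    have h1 : Bm⁻¹ = T * T := by rw [← hQQ, Matrix.mul_inv_rev]
    rw [h1]
    have := Matrix.l2_opNorm_conjTranspose_mul_self T
    rwa [hTherm.eq] at this
  -- difference identity
  have hST : S - T = T * (Q - P) * S := by
    have h1 : T * (Q - P) * S = T * Q * S - T * (P * S) := by noncomm_ring
    rw [h1, hTQ, hPS, one_mul, mul_one]
  -- main decomposition
  have hmain : S * Ap * S - T * Bp * T
      = (S - T) * Ap * S + T * Ap * (S - T) + T * (Ap - Bp) * T := by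
    noncomm_ring
  -- abbreviations
  have hQP : ‖Q - P‖ ≤ Real.sqrt ‖Bm - Am‖ :=
    sqrt_norm_bound hAm.posSemidef hBm.posSemidef
  have hd : ‖S - T‖ ≤ ‖T‖ * ‖Q - P‖ * ‖S‖ := by
    rw [hST]
    calc ‖T * (Q - P) * S‖ ≤ ‖T * (Q - P)‖ * ‖S‖ := norm_mul_le _ _
      _ ≤ ‖T‖ * ‖Q - P‖ * ‖S‖ := by
          have := norm_mul_le T (Q - P)
          nlinarith [norm_nonneg S]
  have htle : ‖T‖ ≤ ‖S‖ + ‖S - T‖ := by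
    have h := norm_sub_le S (S - T)
    rwa [sub_sub_cancel] at h
  have hLHS : ‖S * Ap * S - T * Bp * T‖
      ≤ ‖S - T‖ * ‖Ap‖ * ‖S‖ + ‖T‖ * ‖Ap‖ * ‖S - T‖ + ‖T‖ * ‖Ap - Bp‖ * ‖T‖ := by
    rw [hmain]
    have t1 : ‖(S - T) * Ap * S‖ ≤ ‖S - T‖ * ‖Ap‖ * ‖S‖ := by
      calc ‖(S - T) * Ap * S‖ ≤ ‖(S - T) * Ap‖ * ‖S‖ := norm_mul_le _ _
        _ ≤ ‖S - T‖ * ‖Ap‖ * ‖S‖ := by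
            have := norm_mul_le (S - T) Ap
            nlinarith [norm_nonneg S]
    have t2 : ‖T * Ap * (S - T)‖ ≤ ‖T‖ * ‖Ap‖ * ‖S - T‖ := by
      calc ‖T * Ap * (S - T)‖ ≤ ‖T * Ap‖ * ‖S - T‖ := norm_mul_le _ _
        _ ≤ ‖T‖ * ‖Ap‖ * ‖S - T‖ := by
            have := norm_mul_le T Ap
            nlinarith [norm_nonneg (S - T)]
    have t3 : ‖T * (Ap - Bp) * T‖ ≤ ‖T‖ * ‖Ap - Bp‖ * ‖T‖ := by
      calc ‖T * (Ap - Bp) * T‖ ≤ ‖T * (Ap - Bp)‖ * ‖T‖ := norm_mul_le _ _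
        _ ≤ ‖T‖ * ‖Ap - Bp‖ * ‖T‖ := by
            have := norm_mul_le T (Ap - Bp)
            nlinarith [norm_nonneg T]
    calc ‖(S - T) * Ap * S + T * Ap * (S - T) + T * (Ap - Bp) * T‖
        ≤ ‖(S - T) * Ap * S + T * Ap * (S - T)‖ + ‖T * (Ap - Bp) * T‖ := norm_add_le _ _
      _ ≤ (‖(S - T) * Ap * S‖ + ‖T * Ap * (S - T)‖) + ‖T * (Ap - Bp) * T‖ := by
          have := norm_add_le ((S - T) * Ap * S) (T * Ap * (S - T))
          linarith
      _ ≤ ‖S - T‖ * ‖Ap‖ * ‖S‖ + ‖T‖ * ‖Ap‖ * ‖S - T‖ + ‖T‖ * ‖Ap - Bp‖ * ‖T‖ := by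
          linarith
  simp only [specNorm_eq]
  rw [eAm, eBm]
  set s := ‖S‖
  set t := ‖T‖
  set p := ‖Ap‖
  set q := ‖Ap - Bp‖
  set e := ‖Q - P‖
  set d := ‖S - T‖
  set r := Real.sqrt ‖Bm - Am‖ with hrdef
  have hr2 : r * r = ‖Bm - Am‖ := Real.mul_self_sqrt (norm_nonneg _)
  have hs0 : 0 ≤ s := norm_nonneg _
  have ht0 : 0 ≤ t := norm_nonneg _
  have hp0 : 0 ≤ p := norm_nonneg _
  have hq0 : 0 ≤ q := norm_nonneg _
  have he0 : 0 ≤ e := norm_nonneg _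
  have hd0 : 0 ≤ d := norm_nonneg _
  have hr0 : 0 ≤ r := Real.sqrt_nonneg _
  rw [← hr2]
  refine le_trans hLHS ?_
  clear_value s t p q e d r
  clear hST hmain hPS hTQ hPP hQQ hdetP hdetQ hSherm hTherm eAm eBm hrdef hLHS
  have hder : d ≤ s * t * r := by
    have h1 : t * e ≤ t * r := mul_le_mul_of_nonneg_left hQP ht0
    have h2 : t * e * s ≤ t * r * s := mul_le_mul_of_nonneg_right h1 hs0
    nlinarith
  have hts : t ≤ s + s * t * r := le_trans htle (by linarith)
  have hstr : 0 ≤ s * t * r := by positivity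
  have key : d * s + t * d ≤ s * s * (t * t * (r * r)) + 2 * (s * s) * (t * r) := by
    have k1 : d * s ≤ s * t * r * s := mul_le_mul_of_nonneg_right hder hs0
    have k2 : t * d ≤ t * (s * t * r) := mul_le_mul_of_nonneg_left hder ht0
    have k3 : t * (s * t * r) ≤ (s + s * t * r) * (s * t * r) :=
      mul_le_mul_of_nonneg_right hts hstr
    nlinarith
  nlinarith [mul_le_mul_of_nonneg_left key hp0]
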